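/- Let (S_n) be a sequence of p×p symmetric positive definite real matrices (indexed by pairs) converging entrywise to a symmetric positive definite matrix Σ. Suppose that for each n, K_n is a separable positive definite matrix minimizing d(K' : S_n) over all separable positive definite p×p matrices K', and that K is the unique separable positive definite matrix minimizing d(K' : Σ) over all separable positive definite matrices K'. Then K_n converges entrywise to K. -/

import Mathlib

open Matrix BigOperators Filter

/-- The separable (Kronecker) product `M2 ⊛ M1`: entry at `((i,j),(i',j'))` is
`M1 i i' * M2 j j'`. -/
noncomputable def sep {p1 p2 : ℕ} (M1 : Matrix (Fin p1) (Fin p1) ℝ)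
    (M2 : Matrix (Fin p2) (Fin p2) ℝ) :
    Matrix (Fin p1 × Fin p2) (Fin p1 × Fin p2) ℝ :=
  fun x y => M1 x.1 y.1 * M2 x.2 y.2

/-- A `p × p` matrix is separable positive definite if it is the separable product of
two symmetric positive definite matrices. -/
def SepPD {p1 p2 : ℕ} (K : Matrix (Fin p1 × Fin p2) (Fin p1 × Fin p2) ℝ) : Prop :=
  ∃ (S1 : Matrix (Fin p1) (Fin p1) ℝ) (S2 : Matrix (Fin p2) (Fin p2) ℝ),
    S1.PosDef ∧ S2.PosDef ∧ K = sep S1 S2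

/-- The divergence `d(K : S) = log det K + trace (K⁻¹ S)`. -/
noncomputable def dvg {ι : Type*} [Fintype ι] [DecidableEq ι] (K S : Matrix ι ι ℝ) : ℝ :=
  Real.log K.det + (K⁻¹ * S).trace

/-- `P1 S B` has entries `∑_{j,j'} B j j' * S (i,j) (i',j')`. -/
noncomputable def P1 {p1 p2 : ℕ} (S : Matrix (Fin p1 × Fin p2) (Fin p1 × Fin p2) ℝ)
    (B : Matrix (Fin p2) (Fin p2) ℝ) : Matrix (Fin p1) (Fin p1) ℝ :=
  fun i i' => ∑ j, ∑ j', B j j' * S (i, j) (i', j')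

/-- `P2 S A` has entries `∑_{i,i'} A i i' * S (i,j) (i',j')`. -/
noncomputable def P2 {p1 p2 : ℕ} (S : Matrix (Fin p1 × Fin p2) (Fin p1 × Fin p2) ℝ)
    (A : Matrix (Fin p1) (Fin p1) ℝ) : Matrix (Fin p2) (Fin p2) ℝ :=
  fun j j' => ∑ i, ∑ i', A i i' * S (i, j) (i', j')

variable {m : Type*} [Fintype m] [DecidableEq m]

lemma trace_eq_sum_eigs {A : Matrix m m ℝ} (hA : A.IsHermitian) :
    A.trace = ∑ i, hA.eigenvalues i := by
  nth_rewrite 1 [hA.spectral_theorem]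
  rw [Unitary.conjStarAlgAut_apply, Matrix.trace_mul_cycle, Unitary.coe_star_mul_self, one_mul, Matrix.trace_diagonal]
  simp

lemma sub_smul_one_psd {A : Matrix m m ℝ} (hA : A.IsHermitian) {a : ℝ}
    (h : ∀ i, a ≤ hA.eigenvalues i) : (A - a • 1).PosSemidef := by
  have : A - a • 1 = (hA.eigenvectorUnitary : Matrix m m ℝ) *
      (Matrix.diagonal (fun i => hA.eigenvalues i - a)) *
      (star (hA.eigenvectorUnitary : Matrix m m ℝ)) := by
    have h1 : (hA.eigenvectorUnitary : Matrix m m ℝ) * (a • (1 : Matrix m m ℝ)) *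
        (star (hA.eigenvectorUnitary : Matrix m m ℝ)) = a • 1 := by
      rw [Matrix.mul_smul, Matrix.mul_one, Matrix.smul_mul]
      congr 1
      simpa using Unitary.coe_mul_star_self hA.eigenvectorUnitary
    nth_rewrite 1 [hA.spectral_theorem]
    rw [Unitary.conjStarAlgAut_apply, ← h1, ← Matrix.sub_mul, ← Matrix.mul_sub]
    congr 1
    congr 1
    rw [Matrix.smul_one_eq_diagonal, Matrix.diagonal_sub]
    congr 1
  rw [this]
  have hd : (Matrix.diagonal (fun i => hA.eigenvalues i - a)).PosSemidef :=
    Matrix.PosSemidef.diagonal (fun i => by simpa using h i)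
  have := hd.mul_mul_conjTranspose_same (hA.eigenvectorUnitary : Matrix m m ℝ)
  exact this

lemma smul_one_sub_psd {A : Matrix m m ℝ} (hA : A.IsHermitian) {b : ℝ}
    (h : ∀ i, hA.eigenvalues i ≤ b) : (b • 1 - A).PosSemidef := by
  have : b • (1 : Matrix m m ℝ) - A = (hA.eigenvectorUnitary : Matrix m m ℝ) *
      (Matrix.diagonal (fun i => b - hA.eigenvalues i)) *
      (star (hA.eigenvectorUnitary : Matrix m m ℝ)) := by
    have h1 : (hA.eigenvectorUnitary : Matrix m m ℝ) * (b • (1 : Matrix m m ℝ)) *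
        (star (hA.eigenvectorUnitary : Matrix m m ℝ)) = b • 1 := by
      rw [Matrix.mul_smul, Matrix.mul_one, Matrix.smul_mul]
      congr 1
      simpa using Unitary.coe_mul_star_self hA.eigenvectorUnitary
    have h2 : (Matrix.diagonal fun i => b - hA.eigenvalues i) =
        b • (1 : Matrix m m ℝ) - Matrix.diagonal (RCLike.ofReal ∘ hA.eigenvalues) := by
      rw [Matrix.smul_one_eq_diagonal, Matrix.diagonal_sub]
      congr 1
    rw [eq_comm, h2, Matrix.mul_sub, Matrix.sub_mul, h1, ← Unitary.conjStarAlgAut_apply (S := ℝ), ← hA.spectral_theorem]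
  rw [this]
  have hd : (Matrix.diagonal (fun i => b - hA.eigenvalues i)).PosSemidef :=
    Matrix.PosSemidef.diagonal (fun i => by simpa using h i)
  have := hd.mul_mul_conjTranspose_same (hA.eigenvectorUnitary : Matrix m m ℝ)
  exact this

lemma psd_trace_nonneg {A : Matrix m m ℝ} (hA : A.PosSemidef) : 0 ≤ A.trace := by
  rw [trace_eq_sum_eigs hA.1]
  exact Finset.sum_nonneg fun i _ => hA.eigenvalues_nonneg i

open scoped MatrixOrder in
lemma psd_eq_ctm_self {A : Matrix m m ℝ} (hA : A.PosSemidef) : ∃ B : Matrix m m ℝ, A = Bᴴ * B := by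
  refine ⟨CFC.sqrt A, ?_⟩
  rw [(CFC.sqrt_nonneg A).posSemidef.1]
  exact (CFC.sqrt_mul_sqrt_self A hA.nonneg).symm

lemma trace_mul_psd_nonneg {A B : Matrix m m ℝ} (hA : A.PosSemidef) (hB : B.PosSemidef) :
    0 ≤ (A * B).trace := by
  obtain ⟨C, rfl⟩ := psd_eq_ctm_self hB
  rw [show A * (Cᴴ * C) = (A * Cᴴ) * C from (Matrix.mul_assoc _ _ _).symm,
    Matrix.trace_mul_cycle]
  exact psd_trace_nonneg (hA.mul_mul_conjTranspose_same C)

lemma psd_diag_nonneg {A : Matrix m m ℝ} (hA : A.PosSemidef) (i : m) : 0 ≤ A i i := by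
  have := hA.dotProduct_mulVec_nonneg (Pi.single i 1)
  simpa [Matrix.mulVec_single, single_dotProduct] using this

lemma abs_entry_le_trace {A : Matrix m m ℝ} (hA : A.PosSemidef) (x y : m) :
    |A x y| ≤ A.trace := by
  rcases eq_or_ne x y with rfl | hxy
  · rw [abs_of_nonneg (psd_diag_nonneg hA x)]
    rw [Matrix.trace]
    exact Finset.single_le_sum (f := fun i => A.diag i)
      (fun i _ => psd_diag_nonneg hA i) (Finset.mem_univ x)
  · have hsym : A y x = A x y := by
      have := hA.1
      rw [Matrix.IsHermitian] at this
      conv_lhs => rw [← this]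
      simp [Matrix.conjTranspose_apply]
    have key : ∀ c : ℝ, 0 ≤ A x x + c * (A x y + A y x) + c * c * A y y := by
      intro c
      have hv := hA.dotProduct_mulVec_nonneg (Pi.single x 1 + Pi.single y c)
      simp only [star_trivial, Matrix.mulVec_add, Matrix.mulVec_single,
        dotProduct_add, add_dotProduct, single_dotProduct,
        mul_one, one_mul, Pi.smul_apply, Matrix.col_apply, op_smul_eq_mul] at hv
      nlinarith [hv]
    have h2 : A x x + A y y ≤ A.trace := by
      have hs : ∑ i ∈ ({x, y} : Finset m), A i i ≤ ∑ i, A i i :=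
        Finset.sum_le_sum_of_subset_of_nonneg (Finset.subset_univ _)
          (fun i _ _ => psd_diag_nonneg hA i)
      rw [Finset.sum_insert (by simpa using hxy), Finset.sum_singleton] at hs
      simpa [Matrix.trace, Matrix.diag] using hs
    have k1 := key 1
    have k2 := key (-1)
    have : 2 * |A x y| ≤ A x x + A y y := by
      rcases abs_cases (A x y) with ⟨h, _⟩ | ⟨h, _⟩ <;> rw [h] <;> nlinarith
    have htr := psd_trace_nonneg hA
    nlinarith [abs_nonneg (A x y)]

lemma posdef_of_psd_det_ne_zero {A : Matrix m m ℝ} (hA : A.PosSemidef) (hd : A.det ≠ 0) :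
    A.PosDef := by
  refine Matrix.PosDef.of_dotProduct_mulVec_pos hA.1 fun v hv => ?_
  rcases lt_or_eq_of_le (hA.dotProduct_mulVec_nonneg v) with h | h
  · exact h
  · exfalso
    have h0 : A *ᵥ v = 0 := (hA.dotProduct_mulVec_zero_iff v).mp h.symm
    have : v = 0 := by
      have := congrArg (fun w => A⁻¹ *ᵥ w) h0
      simpa [Matrix.mulVec_mulVec, Matrix.nonsing_inv_mul A (isUnit_iff_ne_zero.mpr hd)] using this
    exact hv this

lemma trace_inv_eq {A : Matrix m m ℝ} (hA : A.PosDef) :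
    A⁻¹.trace = ∑ i, (hA.1.eigenvalues i)⁻¹ := by
  set U : Matrix m m ℝ := (hA.1.eigenvectorUnitary : Matrix m m ℝ) with hU
  set D : Matrix m m ℝ := Matrix.diagonal (RCLike.ofReal ∘ hA.1.eigenvalues) with hD
  set D' : Matrix m m ℝ := Matrix.diagonal (fun i => (hA.1.eigenvalues i)⁻¹) with hD'
  have hUU : U * star U = 1 := Unitary.coe_mul_star_self hA.1.eigenvectorUnitary
  have hUU' : star U * U = 1 := Unitary.coe_star_mul_self hA.1.eigenvectorUnitary
  have hdd : D * D' = 1 := by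
    rw [hD, hD', Matrix.diagonal_mul_diagonal]
    rw [show (fun i => (RCLike.ofReal ∘ hA.1.eigenvalues) i * (hA.1.eigenvalues i)⁻¹) =
      fun _ => (1:ℝ) from funext fun i => by
        simp [mul_inv_cancel₀ (ne_of_gt (hA.eigenvalues_pos i))]]
    exact Matrix.diagonal_one
  have hinv : A⁻¹ = U * D' * star U := by
    apply Matrix.inv_eq_right_inv
    nth_rewrite 1 [hA.1.spectral_theorem]
    simp only [Unitary.conjStarAlgAut_apply, Matrix.mul_assoc]
    rw [show star U * (U * (D' * star U)) = D' * star U from by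
      rw [← Matrix.mul_assoc, hUU', Matrix.one_mul]]
    rw [show D * (D' * star U) = star U from by
      rw [← Matrix.mul_assoc, hdd, Matrix.one_mul]]
    exact hUU
  rw [hinv, Matrix.trace_mul_cycle, hUU', Matrix.one_mul, hD',
    Matrix.trace_diagonal]

lemma logdet_eq {A : Matrix m m ℝ} (hA : A.PosDef) :
    Real.log A.det = ∑ i, Real.log (hA.1.eigenvalues i) := by
  rw [hA.1.det_eq_prod_eigenvalues]
  rw [Real.log_prod]
  · simp
  · exact fun i _ => by
      simpa using ne_of_gt (hA.eigenvalues_pos i)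

open Kronecker

lemma sep_eq_kron {p1 p2 : ℕ} (M1 : Matrix (Fin p1) (Fin p1) ℝ)
    (M2 : Matrix (Fin p2) (Fin p2) ℝ) : sep M1 M2 = M1 ⊗ₖ M2 := rfl

lemma kron_conjTranspose {p1 p2 : ℕ} (M1 : Matrix (Fin p1) (Fin p1) ℝ)
    (M2 : Matrix (Fin p2) (Fin p2) ℝ) : (M1 ⊗ₖ M2)ᴴ = M1ᴴ ⊗ₖ M2ᴴ := by
  ext x y
  simp [Matrix.conjTranspose_apply, Matrix.kroneckerMap_apply]

lemma sep_posSemidef {p1 p2 : ℕ} {S1 : Matrix (Fin p1) (Fin p1) ℝ}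
    {S2 : Matrix (Fin p2) (Fin p2) ℝ} (h1 : S1.PosSemidef) (h2 : S2.PosSemidef) :
    (sep S1 S2).PosSemidef := by
  obtain ⟨B1, hB1⟩ := psd_eq_ctm_self h1
  obtain ⟨B2, hB2⟩ := psd_eq_ctm_self h2
  rw [sep_eq_kron, hB1, hB2, Matrix.mul_kronecker_mul, ← kron_conjTranspose]
  exact Matrix.posSemidef_conjTranspose_mul_self _

lemma sepPD_posDef {p1 p2 : ℕ} {K : Matrix (Fin p1 × Fin p2) (Fin p1 × Fin p2) ℝ}
    (h : SepPD K) : K.PosDef := by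
  obtain ⟨S1, S2, h1, h2, rfl⟩ := h
  refine posdef_of_psd_det_ne_zero (sep_posSemidef h1.posSemidef h2.posSemidef) ?_
  rw [sep_eq_kron, Matrix.det_kronecker]
  exact ne_of_gt (mul_pos (pow_pos h1.det_pos _) (pow_pos h2.det_pos _))

lemma sep_qf {p1 p2 : ℕ} (A : Matrix (Fin p1) (Fin p1) ℝ) (B : Matrix (Fin p2) (Fin p2) ℝ)
    (v : Fin p1 → ℝ) (w : Fin p2 → ℝ) :
    star (fun q : Fin p1 × Fin p2 => v q.1 * w q.2) ⬝ᵥ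
      (sep A B *ᵥ fun q : Fin p1 × Fin p2 => v q.1 * w q.2) =
    (star v ⬝ᵥ (A *ᵥ v)) * (star w ⬝ᵥ (B *ᵥ w)) := by
  have hL : (star (fun q : Fin p1 × Fin p2 => v q.1 * w q.2) ⬝ᵥ
      (sep A B *ᵥ fun q : Fin p1 × Fin p2 => v q.1 * w q.2)) =
      ∑ i, ∑ j, ∑ i', ∑ j', (v i * A i i' * v i') * (w j * B j j' * w j') := by
    simp only [star_trivial, dotProduct, Matrix.mulVec, sep, Fintype.sum_prod_type]
    refine Finset.sum_congr rfl fun i _ => Finset.sum_congr rfl fun j _ => ?_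
    rw [Finset.mul_sum]
    refine Finset.sum_congr rfl fun i' _ => ?_
    rw [Finset.mul_sum]
    exact Finset.sum_congr rfl fun j' _ => by ring
  have hR : (star v ⬝ᵥ (A *ᵥ v)) * (star w ⬝ᵥ (B *ᵥ w)) =
      ∑ i, ∑ j, ∑ i', ∑ j', (v i * A i i' * v i') * (w j * B j j' * w j') := by
    simp only [star_trivial, dotProduct, Matrix.mulVec]
    rw [Finset.sum_mul_sum]
    refine Finset.sum_congr rfl fun i _ => Finset.sum_congr rfl fun j _ => ?_
    rw [Finset.mul_sum, Finset.sum_mul]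
    refine Finset.sum_congr rfl fun i' _ => ?_
    rw [Finset.mul_sum, Finset.mul_sum]
    exact Finset.sum_congr rfl fun j' _ => by ring
  rw [hL, hR]

lemma entry_tendsto {A : ℕ → Matrix m m ℝ} {L : Matrix m m ℝ}
    (h : Tendsto A atTop (nhds L)) (x y : m) :
    Tendsto (fun n => A n x y) atTop (nhds (L x y)) :=
  ((continuous_apply_apply x y).continuousAt.tendsto).comp h

lemma tendsto_matrix_of_entries {A : ℕ → Matrix m m ℝ} {L : Matrix m m ℝ}
    (h : ∀ x y, Tendsto (fun n => A n x y) atTop (nhds (L x y))) :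
    Tendsto A atTop (nhds L) := by
  refine tendsto_pi_nhds.mpr ?_
  intro x
  refine tendsto_pi_nhds.mpr ?_
  intro y
  exact h x y

lemma psd_limit {A : ℕ → Matrix m m ℝ} {L : Matrix m m ℝ}
    (h : Tendsto A atTop (nhds L)) (hpsd : ∀ᶠ n in atTop, (A n).PosSemidef) :
    L.PosSemidef := by
  refine Matrix.PosSemidef.of_dotProduct_mulVec_nonneg ?_ ?_
  · have : ∀ x y, L y x = L x y := by
      intro x y
      refine tendsto_nhds_unique (entry_tendsto h y x) ?_
      have heq : ∀ᶠ n in atTop, A n y x = A n x y := by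
        filter_upwards [hpsd] with n hn
        have := congrFun (congrFun hn.1 y) x
        simpa [Matrix.conjTranspose_apply] using this.symm
      exact Tendsto.congr' (heq.mono fun n hn => hn.symm) (entry_tendsto h x y)
    ext x y
    simp only [Matrix.conjTranspose_apply, star_trivial]
    exact this y x ▸ rfl
  · intro v
    have hcont : Continuous fun M : Matrix m m ℝ => star v ⬝ᵥ (M *ᵥ v) :=
      (continuous_const (y := star v)).dotProduct
        (Continuous.matrix_mulVec continuous_id continuous_const)
    have ht : Tendsto (fun n => star v ⬝ᵥ (A n *ᵥ v)) atTop (nhds (star v ⬝ᵥ (L *ᵥ v))) :=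
      (hcont.continuousAt.tendsto).comp h
    exact ge_of_tendsto ht (hpsd.mono fun n hn => hn.dotProduct_mulVec_nonneg v)

lemma scalar_glb {c t : ℝ} (hc : 0 < c) (ht : 0 < t) : 1 + Real.log c ≤ Real.log t + c / t := by
  have h := Real.log_le_sub_one_of_pos (show 0 < c / t from div_pos hc ht)
  rw [Real.log_div (ne_of_gt hc) (ne_of_gt ht)] at h
  linarith

lemma scalar_upper {c t C' : ℝ} (hc : 0 < c) (ht : 0 < t)
    (h : Real.log t + c / t ≤ C') : t ≤ Real.exp C' := by
  have h1 : Real.log t ≤ C' := by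
    have : 0 < c / t := div_pos hc ht
    linarith
  calc t = Real.exp (Real.log t) := (Real.exp_log ht).symm
    _ ≤ Real.exp C' := Real.exp_le_exp.mpr h1

lemma scalar_inv {c t C' : ℝ} (hc : 0 < c) (ht : 0 < t)
    (h : Real.log t + c / t ≤ C') :
    0 < C' - 1 + Real.log (2 / c) ∧ t⁻¹ ≤ 2 / c * (C' - 1 + Real.log (2 / c)) := by
  set s := t⁻¹ with hs
  have hs0 : 0 < s := inv_pos.mpr ht
  have hlogt : Real.log t = -Real.log s := by
    rw [hs, Real.log_inv]
    ring
  have hct : c / t = c * s := by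
    rw [hs, div_eq_mul_inv]
  have hlog_s : Real.log s ≤ c / 2 * s - 1 + Real.log (2 / c) := by
    have h2 : Real.log (c / 2 * s) ≤ c / 2 * s - 1 :=
      Real.log_le_sub_one_of_pos (by positivity)
    have h3 : Real.log (c / 2 * s) = Real.log (c / 2) + Real.log s :=
      Real.log_mul (by positivity) (ne_of_gt hs0)
    have h4 : Real.log (2 / c) = -Real.log (c / 2) := by
      rw [show (2 : ℝ) / c = (c / 2)⁻¹ by field_simp, Real.log_inv]
    linarith
  have hkey : c / 2 * s ≤ C' - 1 + Real.log (2 / c) := by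
    have : -Real.log s + c * s ≤ C' := by rw [← hlogt, ← hct]; exact h
    linarith
  have hQ : 0 < C' - 1 + Real.log (2 / c) := lt_of_lt_of_le (by positivity) hkey
  refine ⟨hQ, ?_⟩
  have h5 : 2 / c * (c / 2 * s) = s := by field_simp
  have h6 := mul_le_mul_of_nonneg_left hkey (by positivity : (0:ℝ) ≤ 2 / c)
  rw [h5] at h6
  exact h6

lemma exists_loewner_lb [Nonempty m] {A : Matrix m m ℝ} (hA : A.PosDef) :
    ∃ c : ℝ, 0 < c ∧ (A - c • 1).PosSemidef := by
  refine ⟨Finset.univ.inf' Finset.univ_nonempty hA.1.eigenvalues, ?_, ?_⟩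
  · obtain ⟨i, _, hi⟩ := Finset.exists_mem_eq_inf' Finset.univ_nonempty hA.1.eigenvalues
    rw [hi]
    exact hA.eigenvalues_pos i
  · exact sub_smul_one_psd hA.1 fun i => Finset.inf'_le _ (Finset.mem_univ i)

lemma dvg_lower_bound [Nonempty m] {K S : Matrix m m ℝ} (hK : K.PosDef) {c C : ℝ}
    (hc : 0 < c) (hS : (S - c • 1).PosSemidef) (hd : dvg K S ≤ C) (i : m) :
    Real.log (hK.1.eigenvalues i) + c * (hK.1.eigenvalues i)⁻¹
      ≤ C - (Fintype.card m - 1) * (1 + Real.log c) := by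
  have hsum : ∑ j, (Real.log (hK.1.eigenvalues j) + c * (hK.1.eigenvalues j)⁻¹) ≤ C := by
    have htr : (K⁻¹ * S).trace = (K⁻¹ * (S - c • 1)).trace + c * K⁻¹.trace := by
      rw [Matrix.mul_sub, Matrix.mul_smul, Matrix.mul_one, Matrix.trace_sub,
        Matrix.trace_smul]
      simp
    have hnn : 0 ≤ (K⁻¹ * (S - c • 1)).trace :=
      trace_mul_psd_nonneg hK.inv.posSemidef hS
    have hdvg : Real.log K.det + c * K⁻¹.trace ≤ C := by
      rw [dvg, htr] at hd
      linarith
    rw [logdet_eq hK, trace_inv_eq hK, Finset.mul_sum] at hdvg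
    rw [Finset.sum_add_distrib]
    exact hdvg
  have hglb : ∀ j, 1 + Real.log c ≤
      Real.log (hK.1.eigenvalues j) + c * (hK.1.eigenvalues j)⁻¹ := by
    intro j
    have := scalar_glb hc (hK.eigenvalues_pos j)
    rw [div_eq_mul_inv] at this
    exact this
  have herase : (Fintype.card m - 1 : ℝ) * (1 + Real.log c) ≤
      ∑ j ∈ Finset.univ.erase i,
        (Real.log (hK.1.eigenvalues j) + c * (hK.1.eigenvalues j)⁻¹) := by
    have hcard : ((Finset.univ.erase i).card : ℝ) = (Fintype.card m - 1 : ℝ) := by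
      rw [Finset.card_erase_of_mem (Finset.mem_univ i),
        Nat.cast_sub (Finset.card_pos.mpr Finset.univ_nonempty)]
      simp [Finset.card_univ]
    calc (Fintype.card m - 1 : ℝ) * (1 + Real.log c)
        = ∑ _j ∈ Finset.univ.erase i, (1 + Real.log c) := by
          rw [Finset.sum_const, nsmul_eq_mul, hcard]
      _ ≤ _ := Finset.sum_le_sum fun j _ => hglb j
  have := Finset.add_sum_erase Finset.univ
    (fun j => Real.log (hK.1.eigenvalues j) + c * (hK.1.eigenvalues j)⁻¹) (Finset.mem_univ i)
  linarith

lemma qf_lower [Nonempty m] {Sg Sn : Matrix m m ℝ} {c : ℝ} (hc : 0 < c)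
    (hpsd : (Sg - c • 1).PosSemidef)
    (hnear : ∀ x y, |Sn x y - Sg x y| ≤ c / (2 * Fintype.card m))
    (hsym : Sn.IsHermitian) : (Sn - (c/2) • 1).PosSemidef := by
  have hcard : (0:ℝ) < Fintype.card m := by
    exact_mod_cast Fintype.card_pos
  refine Matrix.PosSemidef.of_dotProduct_mulVec_nonneg ?_ ?_
  · apply Matrix.IsHermitian.sub hsym
    ext x y
    simp [Matrix.conjTranspose_apply, Matrix.one_apply, eq_comm]
  · intro v
    have hqf : ∀ (M : Matrix m m ℝ) (a : ℝ), star v ⬝ᵥ ((M - a • 1) *ᵥ v)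
        = star v ⬝ᵥ (M *ᵥ v) - a * (v ⬝ᵥ v) := by
      intro M a
      rw [Matrix.sub_mulVec, dotProduct_sub, Matrix.smul_mulVec,
        Matrix.one_mulVec, dotProduct_smul]
      simp [smul_eq_mul]
    have h1 : c * (v ⬝ᵥ v) ≤ star v ⬝ᵥ (Sg *ᵥ v) := by
      have := hpsd.dotProduct_mulVec_nonneg v
      rw [hqf Sg c] at this
      simp only [star_trivial] at this ⊢
      linarith
    have h2 : |star v ⬝ᵥ (Sn *ᵥ v) - star v ⬝ᵥ (Sg *ᵥ v)| ≤ (c/2) * (v ⬝ᵥ v) := by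
      have hdiff : star v ⬝ᵥ (Sn *ᵥ v) - star v ⬝ᵥ (Sg *ᵥ v)
          = ∑ x, ∑ y, v x * ((Sn x y - Sg x y) * v y) := by
        simp only [star_trivial, dotProduct, Matrix.mulVec, ← Finset.sum_sub_distrib,
          Finset.mul_sum]
        exact Finset.sum_congr rfl fun x _ => Finset.sum_congr rfl fun y _ => by ring
      have habs : |∑ x, ∑ y, v x * ((Sn x y - Sg x y) * v y)|
          ≤ ∑ x, ∑ y, |v x| * (c / (2 * Fintype.card m) * |v y|) := by
        calc |∑ x, ∑ y, v x * ((Sn x y - Sg x y) * v y)|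
            ≤ ∑ x, |∑ y, v x * ((Sn x y - Sg x y) * v y)| :=
              Finset.abs_sum_le_sum_abs _ _
          _ ≤ ∑ x, ∑ y, |v x * ((Sn x y - Sg x y) * v y)| :=
              Finset.sum_le_sum fun x _ => Finset.abs_sum_le_sum_abs _ _
          _ ≤ ∑ x, ∑ y, |v x| * (c / (2 * Fintype.card m) * |v y|) := by
              refine Finset.sum_le_sum fun x _ => Finset.sum_le_sum fun y _ => ?_
              rw [abs_mul, abs_mul]
              exact mul_le_mul_of_nonneg_left
                (mul_le_mul_of_nonneg_right (hnear x y) (abs_nonneg _)) (abs_nonneg _)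
      have hsq : ∑ x, ∑ y, |v x| * (c / (2 * Fintype.card m) * |v y|)
          = c / (2 * Fintype.card m) * (∑ x, |v x|) ^ 2 := by
        have hss : (∑ x, |v x|) ^ 2 = ∑ x, ∑ y, |v x| * |v y| := by
          rw [sq, Finset.sum_mul_sum]
        rw [hss, Finset.mul_sum]
        refine Finset.sum_congr rfl fun x _ => ?_
        rw [Finset.mul_sum]
        exact Finset.sum_congr rfl fun y _ => by ring
      have hcs : (∑ x, |v x|) ^ 2 ≤ (Fintype.card m : ℝ) * (v ⬝ᵥ v) := by
        have hh := Finset.sum_mul_sq_le_sq_mul_sq Finset.univ (fun x => |v x|) (fun _ => (1:ℝ))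
        simp only [mul_one, one_pow, sq_abs, Finset.sum_const, Finset.card_univ,
          nsmul_eq_mul] at hh
        have hvv : v ⬝ᵥ v = ∑ x, v x ^ 2 := by
          simp [dotProduct, sq]
        rw [hvv]
        calc (∑ x, |v x|) ^ 2 ≤ (∑ x, v x ^ 2) * (Fintype.card m : ℝ) := hh
          _ = (Fintype.card m : ℝ) * ∑ x, v x ^ 2 := by ring
      calc |star v ⬝ᵥ (Sn *ᵥ v) - star v ⬝ᵥ (Sg *ᵥ v)|
          ≤ c / (2 * Fintype.card m) * (∑ x, |v x|) ^ 2 := by rw [hdiff]; rw [← hsq]; exact habs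
        _ ≤ c / (2 * Fintype.card m) * ((Fintype.card m : ℝ) * (v ⬝ᵥ v)) :=
            mul_le_mul_of_nonneg_left hcs (by positivity)
        _ = (c/2) * (v ⬝ᵥ v) := by field_simp
    have h3 := hqf Sn (c/2)
    have hfin : (c/2) * (v ⬝ᵥ v) ≤ star v ⬝ᵥ (Sn *ᵥ v) := by
      have habs2 := abs_le.mp h2
      linarith [habs2.1]
    rw [h3]
    simp only [star_trivial] at hfin ⊢
    linarith

lemma posdef_smul {A : Matrix m m ℝ} (hA : A.PosDef) {a : ℝ} (ha : 0 < a) :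
    (a • A).PosDef := by
  refine Matrix.PosDef.of_dotProduct_mulVec_pos ?_ ?_
  · have h := hA.1
    rw [Matrix.IsHermitian] at h ⊢
    ext x y
    have := congrFun (congrFun h x) y
    simp only [Matrix.conjTranspose_apply, Matrix.smul_apply, star_trivial] at this ⊢
    rw [this]
  · intro v hv
    have h := hA.dotProduct_mulVec_pos hv
    have : star v ⬝ᵥ ((a • A) *ᵥ v) = a * (star v ⬝ᵥ (A *ᵥ v)) := by
      rw [Matrix.smul_mulVec, dotProduct_smul, smul_eq_mul]
    rw [this]
    exact mul_pos ha h

lemma posdef_trace_pos [Nonempty m] {A : Matrix m m ℝ} (hA : A.PosDef) : 0 < A.trace := by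
  rw [trace_eq_sum_eigs hA.1]
  exact Finset.sum_pos (fun i _ => hA.eigenvalues_pos i) Finset.univ_nonempty

lemma isCompact_box {k : Type*} [Fintype k] (R : ℝ) :
    IsCompact {M : Matrix k k ℝ | ∀ x y, |M x y| ≤ R} := by
  have he : {M : Matrix k k ℝ | ∀ x y, |M x y| ≤ R} =
      Set.univ.pi fun _ : k => Set.univ.pi fun _ : k => Set.Icc (-R) R := by
    ext M
    simp only [Set.mem_setOf_eq, abs_le]
    exact ⟨fun h i _ j _ => h i j, fun h x y => h x (Set.mem_univ x) y (Set.mem_univ y)⟩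
  rw [he]
  exact isCompact_univ_pi fun _ => isCompact_univ_pi fun _ => isCompact_Icc

lemma sep_scale {p1 p2 : ℕ} (A : Matrix (Fin p1) (Fin p1) ℝ) (B : Matrix (Fin p2) (Fin p2) ℝ)
    {a : ℝ} (ha : a ≠ 0) : sep (a⁻¹ • A) (a • B) = sep A B := by
  funext x y
  simp only [sep, Matrix.smul_apply, smul_eq_mul]
  field_simp

lemma dvg_cont_right {K' : Matrix m m ℝ} {S : ℕ → Matrix m m ℝ} {Sg : Matrix m m ℝ}
    (h : Tendsto S atTop (nhds Sg)) :
    Tendsto (fun n => dvg K' (S n)) atTop (nhds (dvg K' Sg)) := by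
  unfold dvg
  apply Tendsto.const_add
  have hc : Continuous fun M : Matrix m m ℝ => (K'⁻¹ * M).trace :=
    (Continuous.matrix_mul continuous_const continuous_id).matrix_trace
  exact (hc.continuousAt.tendsto).comp h

lemma dvg_tendsto {Kse S : ℕ → Matrix m m ℝ} {L Sg : Matrix m m ℝ}
    (hK : Tendsto Kse atTop (nhds L)) (hS : Tendsto S atTop (nhds Sg)) (hdet : L.det ≠ 0) :
    Tendsto (fun n => dvg (Kse n) (S n)) atTop (nhds (dvg L Sg)) := by
  unfold dvg
  apply Tendsto.add
  · have h1 : Tendsto (fun n => (Kse n).det) atTop (nhds L.det) :=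
      ((Continuous.matrix_det continuous_id).continuousAt.tendsto).comp hK
    exact ((Real.continuousAt_log hdet).tendsto).comp h1
  · have hinvC : ContinuousAt Inv.inv L := by
      apply continuousAt_matrix_inv
      exact NormedRing.inverse_continuousAt (isUnit_iff_ne_zero.mpr hdet).unit
    have hinv : Tendsto (fun n => (Kse n)⁻¹) atTop (nhds L⁻¹) := hinvC.tendsto.comp hK
    have hmul : Tendsto (fun n => (Kse n)⁻¹ * S n) atTop (nhds (L⁻¹ * Sg)) :=
      hinv.mul hS
    exact ((Continuous.matrix_trace continuous_id).continuousAt.tendsto).comp hmul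

theorem stmt16 (p1 p2 : ℕ) (hp1 : 0 < p1) (hp2 : 0 < p2)
    (S : ℕ → Matrix (Fin p1 × Fin p2) (Fin p1 × Fin p2) ℝ)
    (hSpd : ∀ n, (S n).PosDef)
    (Sig : Matrix (Fin p1 × Fin p2) (Fin p1 × Fin p2) ℝ) (hSig : Sig.PosDef)
    (hconv : ∀ x y, Tendsto (fun n => S n x y) atTop (nhds (Sig x y)))
    (K : ℕ → Matrix (Fin p1 × Fin p2) (Fin p1 × Fin p2) ℝ)
    (hKsep : ∀ n, SepPD (K n))
    (hKmin : ∀ n, ∀ K', SepPD K' → dvg (K n) (S n) ≤ dvg K' (S n))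
    (Klim : Matrix (Fin p1 × Fin p2) (Fin p1 × Fin p2) ℝ)
    (hKlimsep : SepPD Klim)
    (hKlimmin : ∀ K', SepPD K' → dvg Klim Sig ≤ dvg K' Sig)
    (huniq : ∀ K', SepPD K' → (∀ K'', SepPD K'' → dvg K' Sig ≤ dvg K'' Sig) → K' = Klim) :
    ∀ x y, Tendsto (fun n => K n x y) atTop (nhds (Klim x y)) := by
  have hne1 : Nonempty (Fin p1) := ⟨⟨0, hp1⟩⟩
  have hne2 : Nonempty (Fin p2) := ⟨⟨0, hp2⟩⟩
  have hKpd : ∀ n, (K n).PosDef := fun n => sepPD_posDef (hKsep n)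
  have hSconv : Tendsto S atTop (nhds Sig) := tendsto_matrix_of_entries hconv
  obtain ⟨c, hc, hcpsd⟩ := exists_loewner_lb hSig
  have hcard : (0:ℝ) < (Fintype.card (Fin p1 × Fin p2) : ℝ) := by
    exact_mod_cast Fintype.card_pos
  set c2 : ℝ := c / 2 with hc2def
  have hc2 : 0 < c2 := by rw [hc2def]; positivity
  set D : ℝ := dvg Klim Sig + 1 with hDdef
  set C' : ℝ := D - ((Fintype.card (Fin p1 × Fin p2) : ℝ) - 1) * (1 + Real.log c2) with hC'def
  set R : ℝ := (Fintype.card (Fin p1 × Fin p2) : ℝ) * Real.exp C' with hRdef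
  set Bc : ℝ := 2 / c2 * (C' - 1 + Real.log (2 / c2)) with hBcdef
  set δ : ℝ := Bc⁻¹ ^ (Fintype.card (Fin p1 × Fin p2)) with hδdef
  -- eventual divergence bound
  have hEd : ∀ᶠ n in atTop, dvg (K n) (S n) ≤ D := by
    have h1 : Tendsto (fun n => dvg Klim (S n)) atTop (nhds (dvg Klim Sig)) :=
      dvg_cont_right hSconv
    have h2 : ∀ᶠ n in atTop, dvg Klim (S n) ≤ D := by
      have hlt : dvg Klim Sig < D := by rw [hDdef]; linarith
      filter_upwards [h1.eventually_lt_const hlt] with n hn using le_of_lt hn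
    filter_upwards [h2] with n hn
    exact le_trans (hKmin n Klim hKlimsep) hn
  -- eventual lower Loewner bound on S n
  have hES : ∀ᶠ n in atTop, ((S n) - c2 • 1).PosSemidef := by
    have hnear : ∀ᶠ n in atTop, ∀ a b : Fin p1 × Fin p2,
        |S n a b - Sig a b| ≤ c / (2 * (Fintype.card (Fin p1 × Fin p2) : ℝ)) := by
      have hpos : 0 < c / (2 * (Fintype.card (Fin p1 × Fin p2) : ℝ)) := by positivity
      refine eventually_all.mpr fun a => eventually_all.mpr fun b => ?_
      have h := (hconv a b)
      rw [Metric.tendsto_nhds] at h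
      filter_upwards [h _ hpos] with n hn
      rw [Real.dist_eq] at hn
      exact le_of_lt hn
    filter_upwards [hnear] with n hn
    exact qf_lower hc hcpsd hn (hSpd n).1
  -- eigenvalue bounds
  have hEig : ∀ᶠ n in atTop, ∀ i, ((hKpd n).1.eigenvalues i ≤ Real.exp C' ∧
      ((hKpd n).1.eigenvalues i)⁻¹ ≤ Bc) := by
    filter_upwards [hEd, hES] with n h1 h2
    intro i
    have hlb := dvg_lower_bound (hKpd n) hc2 h2 h1 i
    rw [← hC'def] at hlb
    have hν : 0 < (hKpd n).1.eigenvalues i := (hKpd n).eigenvalues_pos i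
    have hlb' : Real.log ((hKpd n).1.eigenvalues i) + c2 / ((hKpd n).1.eigenvalues i) ≤ C' := by
      rw [div_eq_mul_inv]; exact hlb
    exact ⟨scalar_upper hc2 hν hlb', (scalar_inv hc2 hν hlb').2⟩
  have hBcpos : 0 < Bc := by
    obtain ⟨n, hn⟩ := hEig.exists
    have i0 : Fin p1 × Fin p2 := ⟨⟨0, hp1⟩, ⟨0, hp2⟩⟩
    exact lt_of_lt_of_le (inv_pos.mpr ((hKpd n).eigenvalues_pos i0)) (hn i0).2
  have hδpos : 0 < δ := by rw [hδdef]; positivity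
  have hinv_le : ∀ {t B : ℝ}, 0 < t → 0 < B → t⁻¹ ≤ B → B⁻¹ ≤ t := by
    intro t B ht hB h
    rw [inv_le_comm₀ hB ht]
    exact h
  -- entrywise and determinant bounds
  have hEbound : ∀ᶠ n in atTop, (∀ a b, |K n a b| ≤ R) ∧ δ ≤ (K n).det := by
    filter_upwards [hEig] with n hn
    have htr : (K n).trace ≤ R := by
      rw [trace_eq_sum_eigs (hKpd n).1, hRdef]
      calc ∑ i, (hKpd n).1.eigenvalues i ≤ ∑ _i : Fin p1 × Fin p2, Real.exp C' :=
            Finset.sum_le_sum fun i _ => (hn i).1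
        _ = (Fintype.card (Fin p1 × Fin p2) : ℝ) * Real.exp C' := by
            rw [Finset.sum_const, nsmul_eq_mul, Finset.card_univ]
    constructor
    · intro a b
      exact le_trans (abs_entry_le_trace (hKpd n).posSemidef a b) htr
    · have hdet : (K n).det = ∏ i, (hKpd n).1.eigenvalues i := by
        simpa using (hKpd n).1.det_eq_prod_eigenvalues
      rw [hdet, hδdef]
      calc Bc⁻¹ ^ (Fintype.card (Fin p1 × Fin p2))
          = ∏ _i : Fin p1 × Fin p2, Bc⁻¹ := by
            rw [Finset.prod_const, Finset.card_univ]
        _ ≤ ∏ i, (hKpd n).1.eigenvalues i :=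
            Finset.prod_le_prod (fun i _ => inv_nonneg.mpr hBcpos.le)
              (fun i _ => hinv_le ((hKpd n).eigenvalues_pos i) hBcpos (hn i).2)
  -- normalized decompositions
  have hdecomp : ∀ n, ∃ (Ap : Matrix (Fin p1) (Fin p1) ℝ) (Bp : Matrix (Fin p2) (Fin p2) ℝ),
      Ap.PosDef ∧ Bp.PosDef ∧ Ap.trace = 1 ∧ K n = sep Ap Bp := by
    intro n
    obtain ⟨A1, B1, h1, h2, heq⟩ := hKsep n
    have htr : 0 < A1.trace := posdef_trace_pos h1
    refine ⟨A1.trace⁻¹ • A1, A1.trace • B1, posdef_smul h1 (inv_pos.mpr htr),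
      posdef_smul h2 htr, ?_, ?_⟩
    · rw [Matrix.trace_smul, smul_eq_mul, inv_mul_cancel₀ (ne_of_gt htr)]
    · rw [heq, sep_scale _ _ (ne_of_gt htr)]
  choose Ap Bp hApd hBpd hAtr hKeq using hdecomp
  have hBrec : ∀ n j j', Bp n j j' = ∑ i, K n (i, j) (i, j') := by
    intro n j j'
    have : ∑ i, K n (i, j) (i, j') = (∑ i, Ap n i i) * Bp n j j' := by
      rw [Finset.sum_mul]
      exact Finset.sum_congr rfl fun i _ => by rw [hKeq n]; rfl
    rw [this, show (∑ i, Ap n i i) = (Ap n).trace from rfl, hAtr n, one_mul]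
  -- subsequence argument
  intro x y
  apply tendsto_of_subseq_tendsto
  intro ns hns
  have hfreq : ∃ᶠ k in atTop, (Ap (ns k), Bp (ns k)) ∈
      ({M : Matrix (Fin p1) (Fin p1) ℝ | ∀ a b, |M a b| ≤ 1} ×ˢ
       {M : Matrix (Fin p2) (Fin p2) ℝ | ∀ a b, |M a b| ≤ (p1 : ℝ) * R}) := by
    apply Filter.Eventually.frequently
    filter_upwards [hns.eventually hEbound] with k hk
    constructor
    · intro a b
      show |Ap (ns k) a b| ≤ 1
      have := abs_entry_le_trace (hApd (ns k)).posSemidef a b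
      rw [hAtr (ns k)] at this
      exact this
    · intro a b
      show |Bp (ns k) a b| ≤ (p1 : ℝ) * R
      rw [hBrec (ns k) a b]
      calc |∑ i, K (ns k) (i, a) (i, b)| ≤ ∑ i, |K (ns k) (i, a) (i, b)| :=
            Finset.abs_sum_le_sum_abs _ _
        _ ≤ ∑ _i : Fin p1, R := Finset.sum_le_sum fun i _ => hk.1 _ _
        _ = (p1 : ℝ) * R := by
            rw [Finset.sum_const, nsmul_eq_mul, Finset.card_univ, Fintype.card_fin]
  haveI : FirstCountableTopology (Matrix (Fin p1) (Fin p1) ℝ) :=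
    inferInstanceAs (FirstCountableTopology (Fin p1 → Fin p1 → ℝ))
  haveI : FirstCountableTopology (Matrix (Fin p2) (Fin p2) ℝ) :=
    inferInstanceAs (FirstCountableTopology (Fin p2 → Fin p2 → ℝ))
  obtain ⟨q, hqs, φ, hφ, hqt⟩ :=
    (IsCompact.prod (isCompact_box 1) (isCompact_box ((p1 : ℝ) * R))).tendsto_subseq' hfreq
  set nk : ℕ → ℕ := fun k => ns (φ k) with hnkdef
  have hnk : Tendsto nk atTop atTop := hns.comp hφ.tendsto_atTop
  have hAi_ : Tendsto (fun k => Ap (nk k)) atTop (nhds q.1) :=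
    (continuous_fst.continuousAt.tendsto).comp hqt
  have hBi_ : Tendsto (fun k => Bp (nk k)) atTop (nhds q.2) :=
    (continuous_snd.continuousAt.tendsto).comp hqt
  set L := sep q.1 q.2 with hLdef
  have hKL : Tendsto (fun k => K (nk k)) atTop (nhds L) := by
    apply tendsto_matrix_of_entries
    intro a b
    have h1 : Tendsto (fun k => Ap (nk k) a.1 b.1 * Bp (nk k) a.2 b.2) atTop
        (nhds (q.1 a.1 b.1 * q.2 a.2 b.2)) :=
      Tendsto.mul (entry_tendsto hAi_ a.1 b.1) (entry_tendsto hBi_ a.2 b.2)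
    refine Tendsto.congr (fun k => ?_) h1
    rw [hKeq (nk k)]
    rfl
  have hLpsd : L.PosSemidef :=
    psd_limit hKL (Filter.Eventually.of_forall fun k => (hKpd (nk k)).posSemidef)
  have hdetL : δ ≤ L.det := by
    have hdt : Tendsto (fun k => (K (nk k)).det) atTop (nhds L.det) :=
      ((Continuous.matrix_det continuous_id).continuousAt.tendsto).comp hKL
    exact ge_of_tendsto hdt ((hnk.eventually hEbound).mono fun k hk => hk.2)
  have hLpd : L.PosDef := posdef_of_psd_det_ne_zero hLpsd (ne_of_gt (lt_of_lt_of_le hδpos hdetL))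
  have hApsd : q.1.PosSemidef :=
    psd_limit hAi_ (Filter.Eventually.of_forall fun k => (hApd (nk k)).posSemidef)
  have hBpsd : q.2.PosSemidef :=
    psd_limit hBi_ (Filter.Eventually.of_forall fun k => (hBpd (nk k)).posSemidef)
  -- positive definiteness of the factors
  have hfactor : ∀ (v : Fin p1 → ℝ) (w : Fin p2 → ℝ), v ≠ 0 → w ≠ 0 →
      0 < (star v ⬝ᵥ (q.1 *ᵥ v)) * (star w ⬝ᵥ (q.2 *ᵥ w)) := by
    intro v w hv hw
    obtain ⟨i0, hi0⟩ := Function.ne_iff.mp hv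
    obtain ⟨j0, hj0⟩ := Function.ne_iff.mp hw
    have hu : (fun qq : Fin p1 × Fin p2 => v qq.1 * w qq.2) ≠ 0 := by
      intro h
      have := congrFun h (i0, j0)
      simp only [Pi.zero_apply] at this hi0 hj0
      exact hi0 (by
        rcases mul_eq_zero.mp this with h' | h'
        · exact h'
        · exact absurd h' hj0)
    have := hLpd.dotProduct_mulVec_pos hu
    rw [hLdef, sep_qf] at this
    exact this
  have hApdi_ : q.1.PosDef := by
    refine Matrix.PosDef.of_dotProduct_mulVec_pos hApsd.1 fun v hv => ?_
    have w0 : (fun _ : Fin p2 => (1:ℝ)) ≠ 0 := by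
      intro h
      have := congrFun h ⟨0, hp2⟩
      simp at this
    have h := hfactor v _ hv w0
    rcases mul_pos_iff.mp h with ⟨h1, _⟩ | ⟨h1, h2⟩
    · exact h1
    · exact absurd h2 (not_lt.mpr (hBpsd.dotProduct_mulVec_nonneg _))
  have hBpdi_ : q.2.PosDef := by
    refine Matrix.PosDef.of_dotProduct_mulVec_pos hBpsd.1 fun w hw => ?_
    have v0 : (fun _ : Fin p1 => (1:ℝ)) ≠ 0 := by
      intro h
      have := congrFun h ⟨0, hp1⟩
      simp at this
    have h := hfactor _ w v0 hw
    rcases mul_pos_iff.mp h with ⟨_, h2⟩ | ⟨h1, h2⟩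
    · exact h2
    · exact absurd h1 (not_lt.mpr (hApsd.dotProduct_mulVec_nonneg _))
  have hLsep : SepPD L := ⟨q.1, q.2, hApdi_, hBpdi_, rfl⟩
  -- minimality of L
  have hLmin : ∀ K', SepPD K' → dvg L Sig ≤ dvg K' Sig := by
    intro K' hK'
    have ha : Tendsto (fun k => dvg (K (nk k)) (S (nk k))) atTop (nhds (dvg L Sig)) :=
      dvg_tendsto hKL (hSconv.comp hnk) (ne_of_gt (lt_of_lt_of_le hδpos hdetL))
    have hb : Tendsto (fun k => dvg K' (S (nk k))) atTop (nhds (dvg K' Sig)) :=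
      dvg_cont_right (hSconv.comp hnk)
    exact le_of_tendsto_of_tendsto' ha hb fun k => hKmin (nk k) K' hK'
  have hLK : L = Klim := huniq L hLsep hLmin
  refine ⟨φ, ?_⟩
  have := entry_tendsto hKL x y
  rw [hLK] at this
  exact this
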